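/- arXiv:1502.06469 — 6 statements merged into one kernel-verified Lean document; each statement's English description precedes it below -/
import Mathlib

section
/- (Nonexistence of period-3 solutions.) Let α, β ∈ ℂ with α² − αβ + β² ≠ 0, and let z₀, z₁, z₂ be nonzero complex numbers satisfying the period-3 system z₀ = α/z₂ + β/z₁, z₁ = α/z₀ + β/z₂, z₂ = α/z₁ + β/z₀. Then z₀ = z₁ = z₂ and z₀² = α + β; i.e., the only solutions of the period-3 system are the equilibria, so Eq.(1) has no solution of prime period 3. -/
/-- Nonexistence of period-3 solutions of Eq.(1): if `α² − αβ + β² ≠ 0` and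
nonzero `z₀, z₁, z₂` satisfy the period-3 system, then they are all equal to a
common equilibrium value, i.e. `z₀ = z₁ = z₂` with `z₀² = α + β`. -/
theorem no_prime_period_three_eq1 (α β z₀ z₁ z₂ : ℂ)
    (hparam : α ^ 2 - α * β + β ^ 2 ≠ 0)
    (h0 : z₀ ≠ 0) (h1 : z₁ ≠ 0) (h2 : z₂ ≠ 0)
    (e0 : z₀ = α / z₂ + β / z₁)
    (e1 : z₁ = α / z₀ + β / z₂)
    (e2 : z₂ = α / z₁ + β / z₀) :
    z₀ = z₁ ∧ z₁ = z₂ ∧ z₀ ^ 2 = α + β := by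
  have E0 : z₀ * z₁ * z₂ = α * z₁ + β * z₂ := by
    field_simp at e0; linear_combination e0
  have E1 : z₀ * z₁ * z₂ = α * z₂ + β * z₀ := by
    field_simp at e1; linear_combination e1
  have E2 : z₀ * z₁ * z₂ = α * z₀ + β * z₁ := by
    field_simp at e2; linear_combination e2
  have k01 : (α ^ 2 - α * β + β ^ 2) * (z₀ - z₁) = 0 := by
    linear_combination α * (E0 - E2) + β * (E2 - E1)
  have k12 : (α ^ 2 - α * β + β ^ 2) * (z₁ - z₂) = 0 := by
    linear_combination α * (E1 - E0) + β * (E0 - E2)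
  have h01 : z₀ = z₁ := sub_eq_zero.mp ((mul_eq_zero.mp k01).resolve_left hparam)
  have h12 : z₁ = z₂ := sub_eq_zero.mp ((mul_eq_zero.mp k12).resolve_left hparam)
  refine ⟨h01, h12, ?_⟩
  subst h01 h12
  have hcube : z₀ ^ 2 * z₀ = (α + β) * z₀ := by linear_combination E0
  exact mul_right_cancel₀ h0 hcube
end

section
/- (Nonexistence of prime period-4 solutions of Eq.(8).) Let α, β ∈ ℂ with α² + β² ≠ 0, and let z₀, z₁, z₂, z₃ be nonzero complex numbers satisfying the period-4 system z₁ = α + β z₀/z₃, z₂ = α + β z₁/z₀, z₃ = α + β z₂/z₁, z₀ = α + β z₃/z₂. Then z₀ = z₂ and z₁ = z₃; i.e., every solution of the period-4 system has period dividing 2, so the equation z_{n+1} = α + β z_n/z_{n-1} has no solution of prime period 4. -/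
/-- Nonexistence of prime period-4 solutions of Eq.(8) `z_{n+1} = α + β z_n/z_{n-1}`:
if `α² + β² ≠ 0` and nonzero `z₀, z₁, z₂, z₃` satisfy the period-4 system, then
`z₀ = z₂` and `z₁ = z₃`, so the cycle has period dividing 2. -/
theorem no_prime_period_four_eq8 (α β z₀ z₁ z₂ z₃ : ℂ)
    (hparam : α ^ 2 + β ^ 2 ≠ 0)
    (h0 : z₀ ≠ 0) (h1 : z₁ ≠ 0) (h2 : z₂ ≠ 0) (h3 : z₃ ≠ 0)
    (e1 : z₁ = α + β * z₀ / z₃)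
    (e2 : z₂ = α + β * z₁ / z₀)
    (e3 : z₃ = α + β * z₂ / z₁)
    (e0 : z₀ = α + β * z₃ / z₂) :
    z₀ = z₂ ∧ z₁ = z₃ := by
  have E1 : z₁ * z₃ = α * z₃ + β * z₀ := by
    field_simp at e1; linear_combination e1
  have E2 : z₂ * z₀ = α * z₀ + β * z₁ := by
    field_simp at e2; linear_combination e2
  have E3 : z₃ * z₁ = α * z₁ + β * z₂ := by
    field_simp at e3; linear_combination e3
  have E4 : z₀ * z₂ = α * z₂ + β * z₃ := by
    field_simp at e0; linear_combination e0
  have hv : (α ^ 2 + β ^ 2) * (z₃ - z₁) = 0 := by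
    linear_combination -α * E1 + α * E3 + β * E2 - β * E4
  have hv0 : z₃ - z₁ = 0 := by
    rcases mul_eq_zero.mp hv with h | h
    · exact absurd h hparam
    · exact h
  have hu : (α ^ 2 + β ^ 2) * (z₂ - z₀) = 0 := by
    linear_combination β * E1 - β * E3 + α * E2 - α * E4
  have hu0 : z₂ - z₀ = 0 := by
    rcases mul_eq_zero.mp hu with h | h
    · exact absurd h hparam
    · exact h
  constructor
  · exact (sub_eq_zero.mp hu0).symm
  · exact (sub_eq_zero.mp hv0).symm
end

section
/- (Necessary conditions for a 2-cycle of Eq.(1).) Let α, β ∈ ℂ and let z₀, z₁ be nonzero complex numbers with z₀ ≠ z₁ satisfying z₁ = α/z₀ + β/z₁ and z₀ = α/z₁ + β/z₀. Then z₀ z₁ = α − β. If in addition β ≠ 0, then z₁ = −z₀ and z₀² = β − α; i.e., the points of any prime period-2 cycle of Eq.(1) are the two square roots of β − α. -/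
/-- Necessary conditions for a prime period-2 cycle of Eq.(1)
`z_{n+1} = α/z_n + β/z_{n-1}`: any 2-cycle `(z₀, z₁)` with `z₀ ≠ z₁` satisfies
`z₀ z₁ = α − β`; if moreover `β ≠ 0`, then `z₁ = −z₀` and `z₀² = β − α`. -/
theorem two_cycle_necessary_eq1 (α β z₀ z₁ : ℂ)
    (h0 : z₀ ≠ 0) (h1 : z₁ ≠ 0) (hne : z₀ ≠ z₁)
    (e1 : z₁ = α / z₀ + β / z₁)
    (e0 : z₀ = α / z₁ + β / z₀) :
    z₀ * z₁ = α - β ∧ (β ≠ 0 → z₁ = -z₀ ∧ z₀ ^ 2 = β - α) := by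
  have E1 : z₁ * z₁ * z₀ = α * z₁ + β * z₀ := by
    field_simp at e1; linear_combination e1
  have E0 : z₀ * z₀ * z₁ = α * z₀ + β * z₁ := by
    field_simp at e0; linear_combination e0
  have hd : z₁ - z₀ ≠ 0 := sub_ne_zero.mpr (Ne.symm hne)
  have hprod : z₀ * z₁ = α - β := by
    have : (z₀ * z₁ - (α - β)) * (z₁ - z₀) = 0 := by ring_nf; linear_combination E1 - E0
    rcases mul_eq_zero.mp this with h | h
    · linear_combination h
    · exact absurd h hd
  refine ⟨hprod, fun hβ => ?_⟩
  have hsum : (z₀ * z₁ - (α + β)) * (z₁ + z₀) = 0 := by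
    linear_combination E1 + E0
  rcases mul_eq_zero.mp hsum with h | h
  · exfalso
    have : β = 0 := by
      have h' := sub_eq_zero.mp h
      linear_combination (hprod - h') / 2
    exact hβ this
  · have hz : z₁ = -z₀ := by linear_combination h
    refine ⟨hz, ?_⟩
    have := hprod
    rw [hz] at this
    linear_combination -this
end

section
/- (Existence of period-2 solutions of Eq.(1).) Let α, β ∈ ℂ with α ≠ β, and let w ∈ ℂ satisfy w² = β − α (so w ≠ 0). Then the alternating sequence z_n = (−1)ⁿ w is a solution of z_{n+1} = α/z_n + β/z_{n-1} for all n, and it is periodic of prime period 2. -/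
/-- Existence of period-2 solutions of Eq.(1): if `α ≠ β` and `w² = β − α`, then
`w ≠ 0`, the alternating sequence `z_n = (−1)ⁿ w` solves
`z_{n+1} = α/z_n + β/z_{n-1}` for all `n`, and it is periodic of prime period 2. -/
theorem two_cycle_exists_eq1 (α β w : ℂ) (hαβ : α ≠ β) (hw : w ^ 2 = β - α) :
    w ≠ 0 ∧
    (∀ n : ℤ, (-1 : ℂ) ^ (n + 1) * w =
      α / ((-1 : ℂ) ^ n * w) + β / ((-1 : ℂ) ^ (n - 1) * w)) ∧
    (∀ n : ℤ, (-1 : ℂ) ^ (n + 2) * w = (-1 : ℂ) ^ n * w) ∧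
    (∀ n : ℤ, (-1 : ℂ) ^ (n + 1) * w ≠ (-1 : ℂ) ^ n * w) := by
  have hw0 : w ≠ 0 := by
    intro h
    apply hαβ
    have : (0 : ℂ) = β - α := by simpa [h] using hw
    exact (sub_eq_zero.mp this.symm).symm
  have hne : ((-1 : ℂ)) ≠ 0 := by norm_num
  have key : ∀ n : ℤ, ((-1 : ℂ)) ^ n ≠ 0 := fun n => zpow_ne_zero n hne
  have hsq : ∀ n : ℤ, ((-1 : ℂ)) ^ n * ((-1 : ℂ)) ^ n = 1 := by
    intro n
    rw [← zpow_add₀ hne]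
    have : n + n = 2 * n := by ring
    rw [this, zpow_mul]
    norm_num
  refine ⟨hw0, ?_, ?_, ?_⟩
  · intro n
    have h1 : ((-1 : ℂ)) ^ (n + 1) = (-1) * (-1 : ℂ) ^ n := by
      rw [zpow_add₀ hne]; ring
    have h2 : ((-1 : ℂ)) ^ (n - 1) = (-1) * (-1 : ℂ) ^ n := by
      rw [sub_eq_add_neg, zpow_add₀ hne, zpow_neg, zpow_one]
      norm_num
    rw [h1, h2]
    field_simp [key n, hw0]
    linear_combination (-1 : ℂ) * hw + (-w^2) * hsq n
  · intro n
    have : ((-1 : ℂ)) ^ (n + 2) = (-1 : ℂ) ^ n * (-1) ^ (2 : ℤ) := zpow_add₀ hne n 2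
    rw [this]; norm_num
  · intro n h
    have h1 : ((-1 : ℂ)) ^ (n + 1) = (-1) * (-1 : ℂ) ^ n := by
      rw [zpow_add₀ hne]; ring
    rw [h1] at h
    have : (-1 : ℂ) ^ n * w ≠ 0 := mul_ne_zero (key n) hw0
    apply this
    linear_combination -h / 2
end

section
/- (Necessary conditions for a 2-cycle of Eq.(8).) Let α, β ∈ ℂ and let z₀, z₁ be nonzero complex numbers with z₀ ≠ z₁ satisfying z₁ = α + β z₀/z₁ and z₀ = α + β z₁/z₀. Then z₀ + z₁ = α − β and z₀ z₁ = −β(α − β); i.e., z₀ and z₁ are the two roots of the quadratic t² − (α − β)t − β(α − β) = 0. -/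
/-- Necessary conditions for a prime period-2 cycle of Eq.(8)
`z_{n+1} = α + β z_n/z_{n-1}`: any 2-cycle `(z₀, z₁)` with `z₀ ≠ z₁` satisfies
`z₀ + z₁ = α − β` and `z₀ z₁ = −β(α − β)`, i.e. `z₀` and `z₁` are the two roots
of `t² − (α − β) t − β(α − β) = 0`. -/
theorem two_cycle_necessary_eq8 (α β z₀ z₁ : ℂ)
    (h0 : z₀ ≠ 0) (h1 : z₁ ≠ 0) (hne : z₀ ≠ z₁)
    (e1 : z₁ = α + β * z₀ / z₁)
    (e0 : z₀ = α + β * z₁ / z₀) :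
    (z₀ + z₁ = α - β ∧ z₀ * z₁ = -β * (α - β)) ∧
    (z₀ ^ 2 - (α - β) * z₀ - β * (α - β) = 0 ∧
     z₁ ^ 2 - (α - β) * z₁ - β * (α - β) = 0) := by
  have E1 : z₁ * z₁ = α * z₁ + β * z₀ := by
    field_simp at e1; linear_combination e1
  have E0 : z₀ * z₀ = α * z₀ + β * z₁ := by
    field_simp at e0; linear_combination e0
  have hd : z₀ - z₁ ≠ 0 := sub_ne_zero.mpr hne
  have hsum : z₀ + z₁ = α - β := by
    have h : (z₀ - z₁) * (z₀ + z₁) = (z₀ - z₁) * (α - β) := by ring_nf; linear_combination E0 - E1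
    exact mul_left_cancel₀ hd h
  have hprod : z₀ * z₁ = -β * (α - β) := by
    have : z₀ * z₀ + z₁ * z₁ = (α + β) * (α - β) := by
      rw [E0, E1]; linear_combination (α + β) * hsum
    linear_combination ((z₀ + z₁ + α - β) * hsum - this) / 2
  refine ⟨⟨hsum, hprod⟩, ?_, ?_⟩
  · linear_combination E0 + β * hsum
  · linear_combination E1 + β * hsum
end

section
/- (Eneström–Kakeya Theorem.) Let n ≥ 1 and let P(z) = a_n zⁿ + a_{n−1} z^{n−1} + ⋯ + a_1 z + a_0 be a polynomial with real coefficients satisfying a_n ≥ a_{n−1} ≥ ⋯ ≥ a_1 ≥ a_0 > 0. Then every complex zero z of P satisfies |z| ≤ 1. -/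
lemma ek_telescope (n : ℕ) (a : ℕ → ℝ) (z : ℂ) :
    (z - 1) * ∑ i ∈ Finset.range (n + 1), (a i : ℂ) * z ^ i
      = (a n : ℂ) * z ^ (n + 1)
        - ((a 0 : ℂ) + ∑ i ∈ Finset.range n, ((a (i + 1) : ℂ) - a i) * z ^ (i + 1)) := by
  induction n with
  | zero => simp; ring
  | succ m ih =>
    rw [Finset.sum_range_succ, Finset.sum_range_succ
      (f := fun i => ((a (i + 1) : ℂ) - a i) * z ^ (i + 1)), mul_add, ih]
    ring

/-- Eneström–Kakeya Theorem: if `P(z) = ∑_{i=0}^n a_i z^i` has real coefficients with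
`a_n ≥ a_{n−1} ≥ ⋯ ≥ a_1 ≥ a_0 > 0` and `n ≥ 1`, then every complex zero `z` of `P`
satisfies `|z| ≤ 1`. -/
theorem enestrom_kakeya (n : ℕ) (hn : 1 ≤ n) (a : ℕ → ℝ)
    (hpos : 0 < a 0) (hmono : ∀ i, i < n → a i ≤ a (i + 1))
    (z : ℂ) (hz : ∑ i ∈ Finset.range (n + 1), (a i : ℂ) * z ^ i = 0) :
    ‖z‖ ≤ 1 := by
  by_contra hr
  push_neg at hr
  set r := ‖z‖ with hrdef
  have hr1 : (1 : ℝ) ≤ r := le_of_lt hr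
  have ha : ∀ i, i ≤ n → 0 < a i := by
    intro i hi
    induction i with
    | zero => exact hpos
    | succ k ih => exact lt_of_lt_of_le (ih (by omega)) (hmono k (by omega))
  have key : (a n : ℂ) * z ^ (n + 1)
      = (a 0 : ℂ) + ∑ i ∈ Finset.range n, ((a (i + 1) : ℂ) - a i) * z ^ (i + 1) := by
    have h1 := ek_telescope n a z
    rw [hz, mul_zero] at h1
    linear_combination -h1
  have habs : a n * r ^ (n + 1)
      ≤ a 0 + ∑ i ∈ Finset.range n, (a (i + 1) - a i) * r ^ (i + 1) := by
    have h2 : ‖((a n : ℂ) * z ^ (n + 1))‖ = a n * r ^ (n + 1) := by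
      rw [norm_mul, norm_pow, Complex.norm_real, Real.norm_eq_abs, abs_of_pos (ha n le_rfl)]
    rw [← h2, key]
    refine le_trans (norm_add_le _ _) ?_
    rw [Complex.norm_real, Real.norm_eq_abs, abs_of_pos hpos]
    gcongr
    refine le_trans (norm_sum_le _ _) ?_
    apply Finset.sum_le_sum
    intro i hi
    rw [norm_mul, norm_pow]
    rw [show ((a (i + 1) : ℂ) - a i) = ((a (i + 1) - a i : ℝ) : ℂ) by push_cast; ring,
      Complex.norm_real, Real.norm_eq_abs, abs_of_nonneg (by linarith [hmono i (Finset.mem_range.mp hi)])]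
  have hbound : a 0 + ∑ i ∈ Finset.range n, (a (i + 1) - a i) * r ^ (i + 1)
      ≤ a n * r ^ n := by
    have h3 : ∑ i ∈ Finset.range n, (a (i + 1) - a i) * r ^ (i + 1)
        ≤ ∑ i ∈ Finset.range n, (a (i + 1) - a i) * r ^ n := by
      apply Finset.sum_le_sum
      intro i hi
      have hd : 0 ≤ a (i + 1) - a i := by linarith [hmono i (Finset.mem_range.mp hi)]
      have : r ^ (i + 1) ≤ r ^ n :=
        pow_le_pow_right₀ hr1 (Finset.mem_range.mp hi)
      nlinarith
    have h4 : ∑ i ∈ Finset.range n, (a (i + 1) - a i) * r ^ n = (a n - a 0) * r ^ n := by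
      rw [← Finset.sum_mul, Finset.sum_range_sub (f := a)]
    have h5 : a 0 ≤ a 0 * r ^ n := by
      nlinarith [one_le_pow₀ hr1 (n := n), hpos.le]
    nlinarith
  have hrn : (0:ℝ) < r ^ n := by positivity
  have han : 0 < a n := ha n le_rfl
  have : a n * r ^ (n + 1) ≤ a n * r ^ n := le_trans habs hbound
  rw [pow_succ] at this
  nlinarith [mul_pos (mul_pos han hrn) (sub_pos.mpr hr)]
end
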